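/- Suppose x* is optimal for the primal LP max r^T x s.t. A x ≤ c, y* is optimal for its dual min c^T y s.t. A^T y = r, y ≥ 0, the index sets (I*, J*) form an optimal basis with x*_{I*} > 0 componentwise and y*_{J*^c} = 0, and A_{J*,I*}^T y*_{J*} = r_{I*}. Then for any sequence x^1, ..., x^N ∈ R^{d_1} with x^n_{I*^c} = 0 for all n, and any sequence of matrices A^1, ..., A^N with E[A^n] = A_{J*,I*} and A^n independent of x^n given the history, defining c^1 = N·c_{J*} and c^{n+1} = c^n - A^n x^n_{I*}, it holds that N·V^{LP} - Σ_{n=1}^N r^T E[x^n] ≤ Σ_{(s,a) ∈ J*} y*_{(s,a)} · E[c^N_{(s,a)}]. -/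
import Mathlib


open Matrix MeasureTheory

/-- the regret decomposition lemma: for the resolving process
with budgets c¹ = N·c_{J*}, cⁿ⁺¹ = cⁿ - Aⁿ xⁿ_{I*}, it holds that
N·V^LP - Σₙ rᵀE[xⁿ] ≤ Σ_{(s,a)∈J*} y*_{(s,a)} E[c^N_{(s,a)}]. -/
theorem resolving_regret_decomposition {Ω : Type*} [MeasurableSpace Ω]
    (μ : Measure Ω) [IsProbabilityMeasure μ]
    (K d1 d2 N : ℕ)
    (A : Matrix (Fin K) (Fin d1) ℝ) (c : Fin K → ℝ) (r : Fin d1 → ℝ)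
    (ι : Fin d2 → Fin d1) (ρ : Fin d2 → Fin K)
    (hι : Function.Injective ι) (hρ : Function.Injective ρ)
    (xstar : Fin d1 → ℝ) (ystar : Fin K → ℝ) (V : ℝ)
    -- x* optimal for the primal, y* optimal for the dual
    (hxfeas : ∀ k, A.mulVec xstar k ≤ c k)
    (hxopt : ∀ y : Fin d1 → ℝ, (∀ k, A.mulVec y k ≤ c k) → r ⬝ᵥ y ≤ r ⬝ᵥ xstar)
    (hyfeas : Aᵀ.mulVec ystar = r) (hynn : ∀ k, 0 ≤ ystar k)
    (hyopt : ∀ z : Fin K → ℝ, Aᵀ.mulVec z = r → (∀ k, 0 ≤ z k) →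
      c ⬝ᵥ ystar ≤ c ⬝ᵥ z)
    (hV1 : V = r ⬝ᵥ xstar) (hV2 : V = c ⬝ᵥ ystar)
    -- (I*, J*) an optimal basis with x*_{I*} > 0, y*_{J*ᶜ} = 0
    (hxpos : ∀ t, 0 < xstar (ι t))
    (hxsupp : ∀ i, (∀ t, ι t ≠ i) → xstar i = 0)
    (hysupp : ∀ k, (∀ t, ρ t ≠ k) → ystar k = 0)
    -- complementary slackness A_{J*,I*}ᵀ y*_{J*} = r_{I*}
    (hcs : (A.submatrix ρ ι)ᵀ.mulVec (fun t => ystar (ρ t)) = fun t => r (ι t))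
    -- the random sequences
    (xs : ℕ → Ω → Fin d1 → ℝ) (As : ℕ → Ω → Matrix (Fin d2) (Fin d2) ℝ)
    (hxssupp : ∀ n ω i, (∀ t, ι t ≠ i) → xs n ω i = 0)
    (hxint : ∀ n i, Integrable (fun ω => xs n ω i) μ)
    (hAxint : ∀ n t, Integrable
      (fun ω => (As n ω).mulVec (fun u => xs n ω (ι u)) t) μ)
    -- E[Aⁿ] = A_{J*,I*}
    (hAmean : ∀ n j k, ∫ ω, As n ω j k ∂μ = A.submatrix ρ ι j k)
    -- Aⁿ independent of xⁿ (given the history): E[Aⁿ xⁿ] = A_{J*,I*} E[xⁿ]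
    (hAx : ∀ n t, ∫ ω, (As n ω).mulVec (fun u => xs n ω (ι u)) t ∂μ
        = (A.submatrix ρ ι).mulVec (fun u => ∫ ω, xs n ω (ι u) ∂μ) t)
    -- the budget process
    (cs : ℕ → Ω → Fin d2 → ℝ)
    (hcs0 : ∀ ω t, cs 0 ω t = (N : ℝ) * c (ρ t))
    (hcsrec : ∀ n ω, n < N →
      cs (n + 1) ω = cs n ω - (As n ω).mulVec (fun u => xs n ω (ι u))) :
    (N : ℝ) * V - ∑ n ∈ Finset.range N, ∫ ω, r ⬝ᵥ xs n ω ∂μ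
      ≤ ∑ t, ystar (ρ t) * ∫ ω, cs N ω t ∂μ := by

  -- integrability of the budget process
  have hcsint : ∀ n, n ≤ N → ∀ t, Integrable (fun ω => cs n ω t) μ := by
    intro n
    induction n with
    | zero =>
      intro _ t
      have : (fun ω => cs 0 ω t) = fun _ => (N : ℝ) * c (ρ t) := by
        funext ω; exact hcs0 ω t
      rw [this]; exact integrable_const _
    | succ m ih =>
      intro hm t
      have hmN : m < N := hm
      have heq : (fun ω => cs (m+1) ω t)
          = fun ω => cs m ω t - (As m ω).mulVec (fun u => xs m ω (ι u)) t := by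
        funext ω; rw [hcsrec m ω hmN]; rfl
      rw [heq]
      exact (ih hmN.le t).sub (hAxint m t)
  -- expectations of entries, abbreviations
  set f : ℕ → Fin d2 → ℝ := fun n t => ∫ ω, cs n ω t ∂μ with hf
  -- per-step identity
  have key : ∀ n, n < N → ∫ ω, r ⬝ᵥ xs n ω ∂μ
      = ∑ u, ystar (ρ u) * (f n u - f (n+1) u) := by
    intro n hn
    have h1 : ∫ ω, r ⬝ᵥ xs n ω ∂μ = ∑ i, r i * ∫ ω, xs n ω i ∂μ := by
      have : (fun ω => r ⬝ᵥ xs n ω) = fun ω => ∑ i, r i * xs n ω i := by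
        funext ω; rfl
      rw [this, integral_finset_sum]
      · exact Finset.sum_congr rfl fun i _ => integral_const_mul _ _
      · intro i _; exact (hxint n i).const_mul _
    have hEx0 : ∀ i, (∀ t, ι t ≠ i) → (∫ ω, xs n ω i ∂μ) = 0 := by
      intro i hi
      have : (fun ω => xs n ω i) = fun _ => (0:ℝ) := by
        funext ω; exact hxssupp n ω i hi
      rw [this, integral_zero]
    have h2 : ∑ i, r i * ∫ ω, xs n ω i ∂μ
        = ∑ t, r (ι t) * ∫ ω, xs n ω (ι t) ∂μ := by
      rw [← Finset.sum_image (g := ι) (f := fun i => r i * ∫ ω, xs n ω i ∂μ)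
        (fun i _ j _ h => hι h)]
      refine (Finset.sum_subset (Finset.subset_univ _) ?_).symm
      intro i _ hi
      have : ∀ t, ι t ≠ i := by
        intro t ht
        exact hi (Finset.mem_image.mpr ⟨t, Finset.mem_univ t, ht⟩)
      rw [hEx0 i this, mul_zero]
    have hr : ∀ t, r (ι t) = ∑ u, A (ρ u) (ι t) * ystar (ρ u) := by
      intro t
      have := congrFun hcs t
      simpa [Matrix.mulVec, dotProduct, Matrix.transpose_apply,
        Matrix.submatrix_apply] using this.symm
    have h3 : ∑ t, r (ι t) * ∫ ω, xs n ω (ι t) ∂μ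
        = ∑ u, ystar (ρ u)
            * ((A.submatrix ρ ι).mulVec (fun v => ∫ ω, xs n ω (ι v) ∂μ) u) := by
      simp only [hr, Matrix.mulVec, dotProduct, Matrix.submatrix_apply,
        Finset.sum_mul, Finset.mul_sum]
      rw [Finset.sum_comm]
      exact Finset.sum_congr rfl fun u _ => Finset.sum_congr rfl fun t _ => by ring
    have h4 : ∀ u, (A.submatrix ρ ι).mulVec (fun v => ∫ ω, xs n ω (ι v) ∂μ) u
        = f n u - f (n+1) u := by
      intro u
      rw [← hAx n u]
      have heq : (fun ω => (As n ω).mulVec (fun v => xs n ω (ι v)) u)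
          = fun ω => cs n ω u - cs (n+1) ω u := by
        funext ω
        have := hcsrec n ω hn
        have := congrFun this u
        simp only [Pi.sub_apply] at this
        linarith
      rw [heq, integral_sub (hcsint n hn.le u) (hcsint (n+1) hn u)]
    rw [h1, h2, h3]
    exact Finset.sum_congr rfl fun u _ => by rw [h4]
  -- sum over n, telescoping
  have htel : ∑ n ∈ Finset.range N, ∫ ω, r ⬝ᵥ xs n ω ∂μ
      = ∑ u, ystar (ρ u) * (f 0 u - f N u) := by
    rw [Finset.sum_congr rfl (fun n hn => key n (Finset.mem_range.mp hn)),
      Finset.sum_comm]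
    refine Finset.sum_congr rfl fun u _ => ?_
    rw [← Finset.mul_sum, Finset.sum_range_sub' (fun n => f n u)]
  have hf0 : ∀ u, f 0 u = (N : ℝ) * c (ρ u) := by
    intro u
    have : (fun ω => cs 0 ω u) = fun _ => (N : ℝ) * c (ρ u) := by
      funext ω; exact hcs0 ω u
    simp only [hf]
    rw [this, integral_const]
    simp
  -- value identity
  have hcy : c ⬝ᵥ ystar = ∑ u, c (ρ u) * ystar (ρ u) := by
    show ∑ k, c k * ystar k = _
    rw [← Finset.sum_image (g := ρ) (f := fun k => c k * ystar k) (fun i _ j _ h => hρ h)]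
    refine (Finset.sum_subset (Finset.subset_univ _) ?_).symm
    intro k _ hk
    have : ∀ t, ρ t ≠ k := by
      intro t ht
      exact hk (Finset.mem_image.mpr ⟨t, Finset.mem_univ t, ht⟩)
    rw [hysupp k this, mul_zero]
  rw [htel, hV2, hcy]
  apply le_of_eq
  rw [Finset.mul_sum, ← Finset.sum_sub_distrib]
  refine Finset.sum_congr rfl fun u _ => ?_
  rw [hf0 u]
  ring
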